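/- For a simple random walk on a finite connected graph G with m edges, for any nonnegative edge-cost function f and any vertices x, y: H^f(x,y) ≤ Σ_{e∈E} (2·d_y(e) + 1)·f(e) ≤ m^2·max(f), where d_y(e) is the minimum distance from y to an endpoint of e. -/

import Mathlib

section CostHittingAux


open Finset

variable {V : Type*} [Fintype V] [DecidableEq V] (G : SimpleGraph V) [DecidableRel G.Adj]

/-- Graph Laplacian applied to `g` at `v`. -/
noncomputable def glap (g : V → ℝ) (v : V) : ℝ :=
  (G.degree v : ℝ) * g v - ∑ u ∈ G.neighborFinset v, g u

lemma glap_const (c : ℝ) (v : V) : glap G (fun _ => c) v = 0 := by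
  rw [glap, Finset.sum_const, ← SimpleGraph.card_neighborFinset_eq_degree, nsmul_eq_mul]
  ring

lemma glap_add (g h : V → ℝ) (v : V) :
    glap G (fun w => g w + h w) v = glap G g v + glap G h v := by
  simp [glap, Finset.sum_add_distrib]; ring

lemma glap_neg (g : V → ℝ) (v : V) : glap G (fun w => - g w) v = - glap G g v := by
  simp [glap, Finset.sum_neg_distrib]; ring

lemma glap_sub (g h : V → ℝ) (v : V) :
    glap G (fun w => g w - h w) v = glap G g v - glap G h v := by
  simp [glap, Finset.sum_sub_distrib]; ring

lemma glap_smul (c : ℝ) (g : V → ℝ) (v : V) :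
    glap G (fun w => c * g w) v = c * glap G g v := by
  rw [glap, glap, mul_sub, Finset.mul_sum]; ring

lemma glap_sum {ι : Type*} (s : Finset ι) (F : ι → V → ℝ) (v : V) :
    glap G (fun w => ∑ i ∈ s, F i w) v = ∑ i ∈ s, glap G (F i) v := by
  classical
  induction s using Finset.induction_on with
  | empty => simp [glap_const]
  | @insert a s hne ih =>
      rw [Finset.sum_insert hne]
      have h2 : (fun w => ∑ i ∈ insert a s, F i w) = fun w => F a w + ∑ i ∈ s, F i w := by
        funext w; rw [Finset.sum_insert hne]
      rw [h2, glap_add, ih]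

/-- Discrete minimum principle. -/
lemma min_principle (hconn : G.Connected) (A : Finset V) (hA : A.Nonempty)
    (h : V → ℝ) (h0 : ∀ v ∈ A, 0 ≤ h v)
    (hs : ∀ v, v ∉ A → 0 ≤ glap G h v) : ∀ v, 0 ≤ h v := by
  have : Nonempty V := hconn.nonempty
  obtain ⟨v₀, -, hv₀⟩ := Finset.exists_min_image Finset.univ h ⟨Classical.arbitrary V, mem_univ _⟩
  by_contra hcon
  push_neg at hcon
  obtain ⟨w, hw⟩ := hcon
  have hmin : h v₀ < 0 := lt_of_le_of_lt (hv₀ w (mem_univ _)) hw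
  have key : ∀ a, h a = h v₀ → ∀ b, G.Adj a b → h b = h v₀ := by
    intro a ha b hab
    have haA : a ∉ A := by
      intro hmem
      exact absurd (h0 a hmem) (by rw [ha]; exact not_le.2 hmin)
    have hsum : (G.degree a : ℝ) * h a - ∑ u ∈ G.neighborFinset a, h u ≥ 0 := hs a haA
    have hdeg : (G.degree a : ℝ) * h a = ∑ _u ∈ G.neighborFinset a, h v₀ := by
      rw [Finset.sum_const, ha, SimpleGraph.degree, nsmul_eq_mul]
    have hle : ∀ u ∈ G.neighborFinset a, h v₀ ≤ h u := fun u _ => hv₀ u (mem_univ _)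
    have hsles : ∑ u ∈ G.neighborFinset a, h u ≤ ∑ _u ∈ G.neighborFinset a, h v₀ := by
      rw [← hdeg]; linarith
    have heq : ∑ _u ∈ G.neighborFinset a, h v₀ = ∑ u ∈ G.neighborFinset a, h u :=
      le_antisymm (Finset.sum_le_sum hle) hsles
    have := (Finset.sum_eq_sum_iff_of_le hle).1 heq
    exact (this b (by simpa using hab)).symm
  have walkprop : ∀ {a b : V} (_w : G.Walk a b), h a = h v₀ → h b = h v₀ := by
    intro a b w
    induction w with
    | nil => exact id
    | cons hadj _p ih => intro ha; exact ih (key _ ha _ hadj)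
  obtain ⟨a₀, ha₀⟩ := hA
  obtain ⟨w⟩ := hconn v₀ a₀
  have := walkprop w rfl
  exact absurd (h0 a₀ ha₀) (by rw [this]; exact not_le.2 hmin)

lemma sum_adj_comm (F : V → V → ℝ) :
    ∑ v, ∑ u ∈ G.neighborFinset v, F v u = ∑ v, ∑ u ∈ G.neighborFinset v, F u v := by
  have h1 : ∀ v : V, G.neighborFinset v = univ.filter (G.Adj v) := by
    intro v; ext u; simp
  simp_rw [h1, Finset.sum_filter]
  rw [Finset.sum_comm]
  refine Finset.sum_congr rfl fun v _ => Finset.sum_congr rfl fun u _ => ?_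
  exact if_congr (G.adj_comm u v) rfl rfl

lemma glap_sym (h k : V → ℝ) :
    ∑ v, h v * glap G k v = ∑ v, glap G h v * k v := by
  unfold glap
  simp only [mul_sub, sub_mul, Finset.mul_sum, Finset.sum_mul]
  rw [Finset.sum_sub_distrib, Finset.sum_sub_distrib]
  have h2 : ∑ v, ∑ u ∈ G.neighborFinset v, h v * k u
      = ∑ v, ∑ u ∈ G.neighborFinset v, h u * k v := sum_adj_comm G (fun v u => h v * k u)
  rw [h2]
  congr 1
  · apply Finset.sum_congr rfl; intro v _; ring
/-- The Dirichlet operator: identity row at `y`, Laplacian elsewhere, as a linear map. -/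
noncomputable def dirop (y : V) : (V → ℝ) →ₗ[ℝ] (V → ℝ) where
  toFun g := fun v => if v = y then g y else glap G g v
  map_add' a b := by
    funext v
    by_cases h : v = y
    · simp [h]
    · simp only [h, if_false, Pi.add_apply]
      exact glap_add G a b v
  map_smul' c a := by
    funext v
    by_cases h : v = y
    · simp [h]
    · simp only [h, if_false, Pi.smul_apply, RingHom.id_apply, smul_eq_mul]
      exact glap_smul G c a v

lemma exists_green (hconn : G.Connected) (y p : V) :
    ∃ g : V → ℝ, g y = 0 ∧ ∀ v, v ≠ y → glap G g v = if v = p then 1 else 0 := by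
  have hinj : Function.Injective (dirop G y) := by
    rw [injective_iff_map_eq_zero]
    intro g hg
    have hgy : g y = 0 := by
      have := congrFun hg y
      simpa [dirop] using this
    have hlap : ∀ v, v ≠ y → glap G g v = 0 := by
      intro v hv
      have := congrFun hg v
      simpa [dirop, hv] using this
    have h1 : ∀ v, 0 ≤ g v := by
      refine min_principle G hconn {y} ⟨y, mem_singleton_self y⟩ g ?_ ?_
      · intro v hv; rw [mem_singleton] at hv; rw [hv, hgy]
      · intro v hv; rw [mem_singleton] at hv; rw [hlap v hv]
    have h2 : ∀ v, 0 ≤ -g v := by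
      refine min_principle G hconn {y} ⟨y, mem_singleton_self y⟩ (fun v => - g v) ?_ ?_
      · intro v hv; rw [mem_singleton] at hv; subst hv; simp [hgy]
      · intro v hv; rw [mem_singleton] at hv; rw [glap_neg, hlap v hv]; simp
    funext v
    have := h2 v
    have := h1 v
    simp only [Pi.zero_apply]
    linarith
  have hsurj : Function.Surjective (dirop G y) :=
    (LinearMap.injective_iff_surjective).1 hinj
  obtain ⟨g, hg⟩ := hsurj (fun v => if v = y then 0 else if v = p then 1 else 0)
  refine ⟨g, ?_, ?_⟩
  · have := congrFun hg y
    simpa [dirop] using this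
  · intro v hv
    have := congrFun hg v
    simpa [dirop, hv] using this
lemma green_nonneg (hconn : G.Connected) (y p : V) (g : V → ℝ) (hg0 : g y = 0)
    (hgl : ∀ v, v ≠ y → glap G g v = if v = p then 1 else 0) : ∀ v, 0 ≤ g v := by
  refine min_principle G hconn {y} ⟨y, mem_singleton_self y⟩ g ?_ ?_
  · intro v hv; rw [mem_singleton] at hv; rw [hv, hg0]
  · intro v hv; rw [mem_singleton] at hv; rw [hgl v hv]
    split <;> norm_num

lemma green_zero (hconn : G.Connected) (y : V) (g : V → ℝ) (hg0 : g y = 0)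
    (hgl : ∀ v, v ≠ y → glap G g v = if v = y then 1 else 0) : ∀ v, g v = 0 := by
  have h1 : ∀ v, 0 ≤ g v := by
    refine min_principle G hconn {y} ⟨y, mem_singleton_self y⟩ g ?_ ?_
    · intro v hv; rw [mem_singleton] at hv; rw [hv, hg0]
    · intro v hv; rw [mem_singleton] at hv; rw [hgl v hv, if_neg hv]
  have h2 : ∀ v, 0 ≤ -g v := by
    refine min_principle G hconn {y} ⟨y, mem_singleton_self y⟩ (fun v => -g v) ?_ ?_
    · intro v hv; rw [mem_singleton] at hv; subst hv; simp [hg0]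
    · intro v hv; rw [mem_singleton] at hv; rw [glap_neg, hgl v hv, if_neg hv]; norm_num
  intro v
  have := h1 v; have := h2 v; linarith

lemma green_max (hconn : G.Connected) (y p : V) (g : V → ℝ) (hg0 : g y = 0)
    (hgl : ∀ v, v ≠ y → glap G g v = if v = p then 1 else 0) : ∀ v, g v ≤ g p := by
  have hnn := green_nonneg G hconn y p g hg0 hgl
  have key : ∀ v, 0 ≤ g p - g v := by
    refine min_principle G hconn {p, y} ⟨p, by simp⟩ (fun v => g p - g v) ?_ ?_
    · intro v hv
      rw [mem_insert, mem_singleton] at hv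
      rcases hv with h | h
      · rw [h]; simp
      · subst h; simpa [hg0] using hnn p
    · intro v hv
      rw [mem_insert, mem_singleton] at hv
      push_neg at hv
      rw [glap_sub, glap_const, hgl v hv.2, if_neg hv.1]
      norm_num
  intro v; have := key v; linarith

lemma green_eval (y p q : V) (gp gq : V → ℝ) (hp0 : gp y = 0)
    (hql : ∀ v, v ≠ y → glap G gq v = if v = q then 1 else 0) :
    ∑ v, gp v * glap G gq v = gp q := by
  rw [← Finset.sum_erase_add _ _ (mem_univ y), hp0]
  have h1 : ∀ v ∈ univ.erase y, gp v * glap G gq v = if v = q then gp v else 0 := by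
    intro v hv
    rw [hql v (mem_erase.1 hv).1]
    split <;> ring
  rw [Finset.sum_congr rfl h1]
  rw [Finset.sum_ite_eq' (univ.erase y) q gp]
  by_cases h : q = y
  · subst h; simp [hp0]
  · simp [h]

lemma green_symm (y p q : V) (gp gq : V → ℝ) (hp0 : gp y = 0) (hq0 : gq y = 0)
    (hpl : ∀ v, v ≠ y → glap G gp v = if v = p then 1 else 0)
    (hql : ∀ v, v ≠ y → glap G gq v = if v = q then 1 else 0) : gp q = gq p := by
  have e1 := green_eval G y p q gp gq hp0 hql
  have e2 := green_eval G y q p gq gp hq0 hpl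
  rw [← e1, glap_sym]
  rw [← e2]
  apply Finset.sum_congr rfl
  intro v _; ring

lemma green_source (y p : V) (hpy : p ≠ y) (g : V → ℝ) (hg0 : g y = 0)
    (hgl : ∀ v, v ≠ y → glap G g v = if v = p then 1 else 0)
    (hmax : ∀ v, g v ≤ g p) (u : V) (hu : G.Adj p u) : g p - g u ≤ 1 := by
  have h1 : glap G g p = 1 := by rw [hgl p hpy, if_pos rfl]
  rw [glap] at h1
  have hdeg : (G.degree p : ℝ) * g p = ∑ _u ∈ G.neighborFinset p, g p := by
    rw [Finset.sum_const, ← SimpleGraph.card_neighborFinset_eq_degree, nsmul_eq_mul]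
  rw [hdeg, ← Finset.sum_sub_distrib] at h1
  have humem : u ∈ G.neighborFinset p := by simpa using hu
  calc g p - g u ≤ ∑ w ∈ G.neighborFinset p, (g p - g w) := by
        refine Finset.single_le_sum (f := fun w => g p - g w) (fun w _ => ?_) humem
        have := hmax w; show 0 ≤ g p - g w; linarith
    _ = 1 := h1

lemma green_le_dist (hconn : G.Connected) (y : V) (g : V → V → ℝ)
    (hg0 : ∀ p, g p y = 0)
    (hgl : ∀ p v, v ≠ y → glap G (g p) v = if v = p then 1 else 0) :
    ∀ (n : ℕ) (p : V), G.dist p y ≤ n → g p p ≤ (n : ℝ) := by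
  intro n
  induction n with
  | zero =>
      intro p hp
      have hpy : p = y := by
        have := Nat.le_zero.1 hp
        exact (hconn.dist_eq_zero_iff).1 this
      have hz := green_zero G hconn y (g y) (hg0 y) (hgl y)
      rw [hpy, hz y]
      norm_num
  | succ n ih =>
      intro p hp
      by_cases hpy : p = y
      · have hz := green_zero G hconn y (g y) (hg0 y) (hgl y)
        rw [hpy, hz y]
        positivity
      · have hd0 : G.dist p y ≠ 0 := fun h => hpy ((hconn.dist_eq_zero_iff).1 h)
        obtain ⟨w, hw⟩ := hconn.exists_walk_length_eq_dist p y
        cases w with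
        | nil => exact absurd (hw ▸ hd0) (by simp)
        | @cons _ u _ hadj rest =>
            have hrl : rest.length + 1 = G.dist p y := by
              simpa using hw
            have hud : G.dist u y ≤ n := by
              have := SimpleGraph.dist_le rest
              omega
            have hmaxp := green_max G hconn y p (g p) (hg0 p) (hgl p)
            have hmaxu := green_max G hconn y u (g u) (hg0 u) (hgl u)
            have hsrc := green_source G y p hpy (g p) (hg0 p) (hgl p) hmaxp u hadj
            have hsym := green_symm G y p u (g p) (g u) (hg0 p) (hg0 u) (hgl p) (hgl u)
            have hih := ih u hud
            have := hmaxu p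
            push_cast
            linarith

lemma green_cross (hconn : G.Connected) (y p q : V) (hpq : G.Adj p q) (g : V → V → ℝ)
    (hg0 : ∀ p, g p y = 0)
    (hgl : ∀ p v, v ≠ y → glap G (g p) v = if v = p then 1 else 0) :
    ∀ x, g p x + g q x ≤ (G.dist p y : ℝ) + (G.dist q y : ℝ) := by
  have hmaxp := green_max G hconn y p (g p) (hg0 p) (hgl p)
  have hmaxq := green_max G hconn y q (g q) (hg0 q) (hgl q)
  have hpp := green_le_dist G hconn y g hg0 hgl (G.dist p y) p le_rfl
  have hqq := green_le_dist G hconn y g hg0 hgl (G.dist q y) q le_rfl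
  have key : ∀ x, 0 ≤ (G.dist p y : ℝ) + (G.dist q y : ℝ) - g p x - g q x := by
    refine min_principle G hconn {p, q, y} ⟨p, by simp⟩ _ ?_ ?_
    · intro v hv
      simp only [mem_insert, mem_singleton] at hv
      rcases hv with h | h | h
      · rw [h]
        show 0 ≤ (G.dist p y : ℝ) + (G.dist q y : ℝ) - g p p - g q p
        linarith [hmaxq p, hpp, hqq]
      · rw [h]
        show 0 ≤ (G.dist p y : ℝ) + (G.dist q y : ℝ) - g p q - g q q
        linarith [hmaxp q, hpp, hqq]
      · rw [h]
        show 0 ≤ (G.dist p y : ℝ) + (G.dist q y : ℝ) - g p y - g q y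
        rw [hg0 p, hg0 q]
        simp only [sub_zero]
        positivity
    · intro v hv
      simp only [mem_insert, mem_singleton] at hv
      push_neg at hv
      have e1 : (fun w => (G.dist p y : ℝ) + (G.dist q y : ℝ) - g p w - g q w)
          = fun w => (((G.dist p y : ℝ) + (G.dist q y : ℝ)) - g p w) - g q w := rfl
      rw [e1, glap_sub, glap_sub, glap_const, hgl p v hv.2.2, hgl q v hv.2.2,
        if_neg hv.1, if_neg hv.2.1]
      norm_num
  intro x
  have := key x; linarith
lemma exists_level_edge (hconn : G.Connected) (y : V) :
    ∀ (n : ℕ) (v : V), G.dist v y = n → ∀ j, j < n →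
      ∃ p q : V, G.Adj p q ∧ G.dist p y = j + 1 ∧ G.dist q y = j := by
  intro n
  induction n with
  | zero => intro v _ j hj; omega
  | succ n ih =>
      intro v hv j hj
      obtain ⟨w, hw⟩ := hconn.exists_walk_length_eq_dist v y
      rw [hv] at hw
      cases w with
      | nil => simp at hw
      | @cons _ u _ hadj rest =>
          have hrl : rest.length = n := by simpa using hw
          have hu1 : G.dist u y ≤ n := hrl ▸ SimpleGraph.dist_le rest
          have hvu : G.dist v u ≤ 1 := by
            have := SimpleGraph.dist_le (SimpleGraph.Walk.cons hadj SimpleGraph.Walk.nil)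
            simpa using this
          have htri := hconn.dist_triangle (u := v) (v := u) (w := y)
          have hu2 : G.dist u y = n := by omega
          rcases Nat.lt_succ_iff_lt_or_eq.1 hj with h | h
          · exact ih u hu2 j h
          · exact ⟨v, u, hadj, by omega, by omega⟩

lemma card_level (hconn : G.Connected) (y : V)
    (dY : Sym2 V → ℕ) (hdY : ∀ u v : V, dY s(u, v) = min (G.dist u y) (G.dist v y))
    (k : ℕ) (hk : (G.edgeFinset.filter (fun e => k < dY e)).Nonempty) :
    (G.edgeFinset.filter (fun e => k < dY e)).card + (k + 1) ≤ G.edgeFinset.card := by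
  obtain ⟨e, he⟩ := hk
  rw [mem_filter] at he
  obtain ⟨heE, hek⟩ := he
  -- find a vertex far from y
  obtain ⟨a, ha⟩ : ∃ a : V, k < G.dist a y := by
    induction e using Sym2.ind with
    | _ p q =>
        rw [hdY p q] at hek
        exact ⟨p, lt_of_lt_of_le hek (min_le_left _ _)⟩
  have hch : ∀ j : ℕ, ∃ ε : Sym2 V, j ≤ k → ε ∈ G.edgeFinset ∧ dY ε = j := by
    intro j
    by_cases hj : j ≤ k
    · obtain ⟨p, q, hadj, hp, hq⟩ :=
        exists_level_edge G hconn y (G.dist a y) a rfl j (by omega)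
      refine ⟨s(p, q), fun _ => ⟨?_, ?_⟩⟩
      · rw [SimpleGraph.mem_edgeFinset]; exact hadj
      · rw [hdY p q, hp, hq]; exact min_eq_right (Nat.le_succ j)
    · exact ⟨s(a, a), fun h => absurd h hj⟩
  choose F hF using hch
  set S := G.edgeFinset.filter (fun e => k < dY e) with hS
  set T := (Finset.range (k + 1)).image F with hT
  have hTE : T ⊆ G.edgeFinset := by
    intro ε hε
    rw [hT, Finset.mem_image] at hε
    obtain ⟨j, hj, rfl⟩ := hε
    exact (hF j (by simpa [Nat.lt_succ_iff] using hj)).1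
  have hTcard : T.card = k + 1 := by
    rw [hT, Finset.card_image_of_injOn, Finset.card_range]
    intro i hi j hj hij
    have hi' : i ≤ k := by simpa [Nat.lt_succ_iff] using hi
    have hj' : j ≤ k := by simpa [Nat.lt_succ_iff] using hj
    have := (hF i hi').2
    rw [hij, (hF j hj').2] at this
    omega
  have hdisj : Disjoint S T := by
    rw [Finset.disjoint_left]
    intro ε hεS hεT
    rw [hT, Finset.mem_image] at hεT
    obtain ⟨j, hj, rfl⟩ := hεT
    have hj' : j ≤ k := by simpa [Nat.lt_succ_iff] using hj
    have h1 := (hF j hj').2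
    rw [hS, mem_filter] at hεS
    omega
  have hsub : S ∪ T ⊆ G.edgeFinset := by
    intro ε hε
    rcases Finset.mem_union.1 hε with h | h
    · exact (mem_filter.1 h).1
    · exact hTE h
  calc S.card + (k + 1) = S.card + T.card := by rw [hTcard]
    _ = (S ∪ T).card := (Finset.card_union_of_disjoint hdisj).symm
    _ ≤ G.edgeFinset.card := Finset.card_le_card hsub

lemma sum_dY_le (hconn : G.Connected) (y : V)
    (dY : Sym2 V → ℕ) (hdY : ∀ u v : V, dY s(u, v) = min (G.dist u y) (G.dist v y)) :
    ∑ e ∈ G.edgeFinset, (2 * dY e + 1) ≤ G.edgeFinset.card ^ 2 := by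
  set m := G.edgeFinset.card with hm
  have hckey : ∀ k : ℕ, (G.edgeFinset.filter (fun e => k < dY e)).card ≤ m - 1 - k := by
    intro k
    rcases Finset.eq_empty_or_nonempty (G.edgeFinset.filter (fun e => k < dY e)) with h | h
    · rw [h]; simp
    · have := card_level G hconn y dY hdY k h
      omega
  have hdle : ∀ e ∈ G.edgeFinset, dY e ≤ m := by
    intro e he
    by_contra h
    push_neg at h
    have h1 : 0 < (G.edgeFinset.filter (fun e => m < dY e)).card :=
      Finset.card_pos.2 ⟨e, mem_filter.2 ⟨he, h⟩⟩
    have := hckey m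
    omega
  have hlayer : ∀ e ∈ G.edgeFinset, dY e = ∑ k ∈ Finset.range m, if k < dY e then 1 else 0 := by
    intro e he
    have h1 : (Finset.range m).filter (fun k => k < dY e) = Finset.range (dY e) := by
      ext k
      simp only [Finset.mem_filter, Finset.mem_range]
      have := hdle e he
      omega
    rw [← Finset.card_filter, h1, Finset.card_range]
  have e2 : ∑ e ∈ G.edgeFinset, dY e
      = ∑ k ∈ Finset.range m, (G.edgeFinset.filter (fun e => k < dY e)).card := by
    rw [Finset.sum_congr rfl hlayer, Finset.sum_comm]
    exact Finset.sum_congr rfl fun k _ => (Finset.card_filter _ _).symm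
  have e3 : ∑ k ∈ Finset.range m, (G.edgeFinset.filter (fun e => k < dY e)).card
      ≤ ∑ k ∈ Finset.range m, (m - 1 - k) :=
    Finset.sum_le_sum fun k _ => hckey k
  have e4 : ∑ k ∈ Finset.range m, (m - 1 - k) = ∑ k ∈ Finset.range m, k :=
    Finset.sum_range_reflect (fun k => k) m
  have e5 : (∑ k ∈ Finset.range m, k) * 2 = m * (m - 1) := Finset.sum_range_id_mul_two m
  have e1 : ∑ e ∈ G.edgeFinset, (2 * dY e + 1) = 2 * (∑ e ∈ G.edgeFinset, dY e) + m := by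
    rw [Finset.sum_add_distrib, Finset.sum_const, Finset.mul_sum]
    simp [hm]
  have e6 : m * (m - 1) + m = m ^ 2 := by
    cases m with
    | zero => rfl
    | succ n => simp [Nat.succ_sub_one]; ring
  omega

end CostHittingAux


/-- `IsCostHittingTime G a f H` : `H` satisfies the linear system characterizing the
expected total cost (relative to the edge-cost function `f`) of the simple random walk
on `G` started at a vertex and stopped at the absorbing vertex `a`:
`H a = 0` and, for `v ≠ a`, `H v = (1/deg v) ∑_{u ~ v} (f {v,u} + H u)`. -/
def IsCostHittingTime {V : Type*} [Fintype V] (G : SimpleGraph V) [DecidableRel G.Adj]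
    (a : V) (f : Sym2 V → ℝ) (H : V → ℝ) : Prop :=
  H a = 0 ∧ ∀ v, v ≠ a →
    (G.degree v : ℝ) * H v = ∑ u ∈ G.neighborFinset v, (f s(v, u) + H u)

/-- For a simple random walk on a finite connected graph `G` with `m` edges, for any
nonnegative edge-cost function `f` and any vertices `x, y`:
`H^f(x,y) ≤ ∑_{e ∈ E} (2·d_y(e) + 1)·f(e) ≤ m²·max(f)`,
where `d_y(e)` is the minimum distance from `y` to an endpoint of `e`. -/
theorem cost_hitting_time_le {V : Type*} [Fintype V] [DecidableEq V]
    (G : SimpleGraph V) [DecidableRel G.Adj] (hconn : G.Connected)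
    (m : ℕ) (hm : m = G.edgeFinset.card)
    (f : Sym2 V → ℝ) (hf : ∀ e ∈ G.edgeFinset, 0 ≤ f e)
    (x y : V)
    (dY : Sym2 V → ℕ) (hdY : ∀ u v : V, dY s(u, v) = min (G.dist u y) (G.dist v y))
    (H : V → ℝ) (hH : IsCostHittingTime G y f H)
    (hne : G.edgeFinset.Nonempty) :
    H x ≤ ∑ e ∈ G.edgeFinset, (2 * (dY e : ℝ) + 1) * f e ∧
      ∑ e ∈ G.edgeFinset, (2 * (dY e : ℝ) + 1) * f e ≤
        (m : ℝ) ^ 2 * G.edgeFinset.sup' hne f := by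
  obtain ⟨hHy, hHsys⟩ := hH
  choose g hg0 hgl using fun p => exists_green G hconn y p
  set eF : Sym2 V → V → ℝ :=
    fun e v => Sym2.lift ⟨fun p q => g p v + g q v, fun p q => by ring⟩ e with heF
  have heFmk : ∀ (p q : V) (v : V), eF s(p, q) v = g p v + g q v := by
    intro p q v; rw [heF]; simp
  set Φ : V → ℝ := fun v => ∑ e ∈ G.edgeFinset, f e * eF e v with hΦ
  -- the per-edge Laplacian
  have hedge_lap : ∀ v, v ≠ y → ∀ e ∈ G.edgeFinset,
      f e * glap G (eF e) v = if v ∈ e then f e else 0 := by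
    intro v hv e he
    induction e using Sym2.ind with
    | _ p q =>
        have hadj : G.Adj p q := SimpleGraph.mem_edgeFinset.1 he
        have hpq : p ≠ q := G.ne_of_adj hadj
        have h1 : glap G (eF s(p, q)) v
            = (if v = p then (1:ℝ) else 0) + (if v = q then 1 else 0) := by
          have h2 : eF s(p, q) = fun w => g p w + g q w := by
            funext w; exact heFmk p q w
          rw [h2, glap_add, hgl p v hv, hgl q v hv]
        rw [h1]
        by_cases h3 : v = p
        · have h4 : v ≠ q := by rw [h3]; exact hpq
          simp [Sym2.mem_iff, h3, h4, hpq]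
        · by_cases h4 : v = q
          · have hqp : q ≠ p := fun hc => hpq hc.symm
            simp [Sym2.mem_iff, h3, h4, hqp]
          · simp [Sym2.mem_iff, h3, h4]
  -- the incidence sum
  have hinc : ∀ v : V, ∑ e ∈ G.edgeFinset, (if v ∈ e then f e else 0)
      = ∑ u ∈ G.neighborFinset v, f s(v, u) := by
    intro v
    rw [← Finset.sum_filter]
    have himg : G.edgeFinset.filter (fun e => v ∈ e)
        = (G.neighborFinset v).image (fun u => s(v, u)) := by
      ext e
      simp only [Finset.mem_filter, Finset.mem_image, SimpleGraph.mem_neighborFinset]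
      constructor
      · rintro ⟨heE, hve⟩
        obtain ⟨u, rfl⟩ := Sym2.mem_iff_exists.1 hve
        exact ⟨u, SimpleGraph.mem_edgeFinset.1 heE, rfl⟩
      · rintro ⟨u, hu, rfl⟩
        exact ⟨SimpleGraph.mem_edgeFinset.2 hu, Sym2.mem_mk_left v u⟩
    rw [himg, Finset.sum_image]
    intro u _ u' _ h
    exact (Sym2.congr_right).1 h
  have hΦlap : ∀ v, v ≠ y → glap G Φ v = ∑ u ∈ G.neighborFinset v, f s(v, u) := by
    intro v hv
    have h1 : glap G Φ v = ∑ e ∈ G.edgeFinset, glap G (fun w => f e * eF e w) v := by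
      rw [hΦ]; exact glap_sum G _ _ v
    rw [h1]
    rw [← hinc v]
    apply Finset.sum_congr rfl
    intro e he
    rw [glap_smul]
    exact hedge_lap v hv e he
  -- H ≤ Φ by the minimum principle
  have hΦy : Φ y = 0 := by
    rw [hΦ]
    apply Finset.sum_eq_zero
    intro e _
    induction e using Sym2.ind with
    | _ p q => rw [heFmk, hg0 p, hg0 q]; ring
  have hHlap : ∀ v, v ≠ y → glap G H v = ∑ u ∈ G.neighborFinset v, f s(v, u) := by
    intro v hv
    rw [glap, hHsys v hv, Finset.sum_add_distrib]
    ring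
  have hcomp : ∀ v, 0 ≤ Φ v - H v := by
    refine min_principle G hconn {y} ⟨y, Finset.mem_singleton_self y⟩ (fun v => Φ v - H v) ?_ ?_
    · intro v hv; rw [Finset.mem_singleton] at hv; subst hv; simp [hΦy, hHy]
    · intro v hv; rw [Finset.mem_singleton] at hv
      rw [glap_sub, hΦlap v hv, hHlap v hv]
      simp
  -- pointwise bound on Φ
  have hΦbound : Φ x ≤ ∑ e ∈ G.edgeFinset, (2 * (dY e : ℝ) + 1) * f e := by
    rw [hΦ]
    apply Finset.sum_le_sum
    intro e he
    induction e using Sym2.ind with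
    | _ p q =>
        have hadj : G.Adj p q := SimpleGraph.mem_edgeFinset.1 he
        have hcross := green_cross G hconn y p q hadj g hg0 hgl x
        have hd1 : G.dist p q = 1 := SimpleGraph.dist_eq_one_iff_adj.2 hadj
        have ht1 := hconn.dist_triangle (u := p) (v := q) (w := y)
        have hd1' : G.dist q p = 1 := by rw [SimpleGraph.dist_comm]; exact hd1
        have ht2 := hconn.dist_triangle (u := q) (v := p) (w := y)
        have hsum : G.dist p y + G.dist q y ≤ 2 * dY s(p, q) + 1 := by
          rw [hdY p q]
          omega
        have hsum' : (G.dist p y : ℝ) + (G.dist q y : ℝ) ≤ 2 * (dY s(p, q) : ℝ) + 1 := by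
          exact_mod_cast hsum
        have hfe := hf _ he
        rw [heFmk]
        calc f s(p, q) * (g p x + g q x)
            ≤ f s(p, q) * (2 * (dY s(p, q) : ℝ) + 1) :=
              mul_le_mul_of_nonneg_left (le_trans hcross hsum') hfe
          _ = (2 * (dY s(p, q) : ℝ) + 1) * f s(p, q) := by ring
  constructor
  · calc H x ≤ Φ x := by have := hcomp x; linarith
      _ ≤ _ := hΦbound
  · set M := G.edgeFinset.sup' hne f with hM
    have hM0 : 0 ≤ M := by
      obtain ⟨e0, he0⟩ := hne
      exact le_trans (hf e0 he0) (Finset.le_sup' f he0)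
    calc ∑ e ∈ G.edgeFinset, (2 * (dY e : ℝ) + 1) * f e
        ≤ ∑ e ∈ G.edgeFinset, (2 * (dY e : ℝ) + 1) * M := by
          apply Finset.sum_le_sum
          intro e he
          apply mul_le_mul_of_nonneg_left (Finset.le_sup' f he)
          positivity
      _ = (∑ e ∈ G.edgeFinset, (2 * (dY e : ℝ) + 1)) * M := by rw [Finset.sum_mul]
      _ ≤ (m : ℝ) ^ 2 * M := by
          apply mul_le_mul_of_nonneg_right _ hM0
          have hnat := sum_dY_le G hconn y dY hdY
          have : (∑ e ∈ G.edgeFinset, (2 * (dY e : ℝ) + 1))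
              = ((∑ e ∈ G.edgeFinset, (2 * dY e + 1) : ℕ) : ℝ) := by
            push_cast
            rfl
          rw [this, hm]
          exact_mod_cast hnat
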